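/- arXiv:2302.13660 — 3 statements merged into one kernel-verified Lean document; each statement's English description precedes it below -/
import Mathlib

section
/- For a linearly ordered field F, Littlewood's Third Principle (LP3) implies Littlewood's Second Principle (LP2): if for all a ≤ b in F, for every sequence (φ_n) of Lebesgue measurable functions [a,b] → F converging almost everywhere in [a,b] to a function f : [a,b] → F, and every ε ∈ P, there exists a measurable set E ⊆ [a,b] such that the functions φ_n converge uniformly to f on [a,b]∖E, χ_E has a Lebesgue integral, and ∫_a^b χ_E < ε, then for all a ≤ b in F, for every Lebesgue measurable function f : [a,b] → F and every ε ∈ P there exists a measurable set E ⊆ [a,b] such that the restriction of f to [a,b]∖E is continuous, χ_E has a Lebesgue integral, and ∫_a^b χ_E < ε. -/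
namespace Littlewood

variable {F : Type*} [Field F] [LinearOrder F] [IsStrictOrderedRing F]

/-- A sequence `s` in `F` converges to `L`. -/
def SeqConv (s : ℕ → F) (L : F) : Prop :=
  ∀ ε : F, 0 < ε → ∃ N : ℕ, ∀ n, N ≤ n → s n - L ∈ Set.Ioo (-ε) ε

/-- `φ` is a step function on `[a,b]`: there is a partition
`a = x 0 < x 1 < ⋯ < x n = b` such that `φ` is constant on each open subinterval. -/
def IsStepOn (a b : F) (φ : F → F) : Prop :=
  ∃ (n : ℕ) (x : ℕ → F), x 0 = a ∧ x n = b ∧ (∀ i < n, x i < x (i + 1)) ∧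
    ∀ i < n, ∃ M : F, ∀ t ∈ Set.Ioo (x i) (x (i + 1)), φ t = M

/-- `I` is the integral of the step function `φ` over `[a,b]`, computed from
an admissible partition `a = x 0 < ⋯ < x n = b` with constant values `M i`. -/
def HasStepIntegral (a b : F) (φ : F → F) (I : F) : Prop :=
  ∃ (n : ℕ) (x : ℕ → F) (M : ℕ → F), x 0 = a ∧ x n = b ∧ (∀ i < n, x i < x (i + 1)) ∧
    (∀ i < n, ∀ t ∈ Set.Ioo (x i) (x (i + 1)), φ t = M i) ∧
    I = ∑ i ∈ Finset.range n, M i * (x (i + 1) - x i)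

/-- `S ⊆ [a,b]` has measure zero: for every `ε > 0` there is a countable family of
open intervals `(c n, d n) ⊆ [a,b]` covering `S` whose partial sums of lengths
converge to a sum less than `ε`. -/
def NullSet (a b : F) (S : Set F) : Prop :=
  ∀ ε : F, 0 < ε → ∃ c d : ℕ → F,
    (∀ n, c n ≤ d n ∧ Set.Ioo (c n) (d n) ⊆ Set.Icc a b) ∧
    S ⊆ (⋃ n, Set.Ioo (c n) (d n)) ∧
    ∃ s : F, s < ε ∧ SeqConv (fun N => ∑ k ∈ Finset.range N, (d k - c k)) s

/-- `Q` holds almost everywhere in `[a,b]`. -/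
def AEOn (a b : F) (Q : F → Prop) : Prop :=
  NullSet a b {x ∈ Set.Icc a b | ¬ Q x}

/-- `φ` is a monotonically decreasing sequence of step functions `[a,b] → P ∪ {0}`
converging to `f` almost everywhere in `[a,b]`. -/
def ApproxSeq (a b : F) (φ : ℕ → F → F) (f : F → F) : Prop :=
  (∀ n, IsStepOn a b (φ n)) ∧
  (∀ n, ∀ x ∈ Set.Icc a b, 0 ≤ φ n x) ∧
  (∀ n, ∀ x ∈ Set.Icc a b, φ (n + 1) x ≤ φ n x) ∧
  AEOn a b fun x => SeqConv (fun n => φ n x) (f x)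

/-- A nonnegative-valued function on `[a,b]` is Lebesgue measurable. -/
def LebMeasurableNN (a b : F) (f : F → F) : Prop :=
  ∃ φ : ℕ → F → F, ApproxSeq a b φ f

/-- A nonnegative-valued function on `[a,b]` has Lebesgue integral `I`:
it is Lebesgue measurable and for every monotonically decreasing sequence of
nonnegative step functions converging to `f` a.e., the sequence of their
(step) integrals converges to `I`. -/
def HasLebIntegralNN (a b : F) (f : F → F) (I : F) : Prop :=
  LebMeasurableNN a b f ∧
    ∀ φ : ℕ → F → F, ApproxSeq a b φ f →
      ∀ J : ℕ → F, (∀ n, HasStepIntegral a b (φ n) (J n)) → SeqConv J I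

/-- A function `[a,b] → F` is Lebesgue measurable (via its nonnegative parts). -/
def LebMeasurable (a b : F) (f : F → F) : Prop :=
  LebMeasurableNN a b (fun x => max (f x) 0) ∧ LebMeasurableNN a b fun x => max (-f x) 0

/-- A function `[a,b] → F` has a Lebesgue integral (via its nonnegative parts). -/
def HasLebIntegral (a b : F) (f : F → F) : Prop :=
  (∃ I : F, HasLebIntegralNN a b (fun x => max (f x) 0) I) ∧
  ∃ I : F, HasLebIntegralNN a b (fun x => max (-f x) 0) I

/-- The characteristic function of `E`. -/
noncomputable def chi (E : Set F) : F → F := E.indicator fun _ => 1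

/-- `E ⊆ [a,b]` is a measurable set: its characteristic function is Lebesgue measurable. -/
def MeasSet (a b : F) (E : Set F) : Prop := LebMeasurableNN a b (chi E)

/-- `E` has Lebesgue measure: `E` has measure zero or `χ_E` has a Lebesgue integral. -/
def HasLebMeasure (a b : F) (E : Set F) : Prop :=
  NullSet a b E ∨ ∃ I : F, HasLebIntegralNN a b (chi E) I

/-- `S` is an interval with endpoints `c ≤ d` (any of the four kinds). -/
def IsIntervalWith (S : Set F) (c d : F) : Prop :=
  S = Set.Icc c d ∨ S = Set.Ico c d ∨ S = Set.Ioc c d ∨ S = Set.Ioo c d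

/-- `S` is an interval. -/
def IsInterval (S : Set F) : Prop := ∃ c d : F, IsIntervalWith S c d

/-- `f` is continuous on `D`. -/
def ContOn (D : Set F) (f : F → F) : Prop :=
  ∀ c ∈ D, ∀ ε : F, 0 < ε → ∃ δ : F, 0 < δ ∧
    ∀ x ∈ D ∩ Set.Ioo (c - δ) (c + δ), f x - f c ∈ Set.Ioo (-ε) ε

/-- The functions `g n` converge uniformly to `f` on `D`. -/
def UnifConvOn (D : Set F) (g : ℕ → F → F) (f : F → F) : Prop :=
  ∀ ε : F, 0 < ε → ∃ N : ℕ, ∀ n, N ≤ n → ∀ x ∈ D, f x - g n x ∈ Set.Ioo (-ε) ε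

/-- `A` is a cut of `F`. -/
def IsCut (A : Set F) : Prop :=
  A.Nonempty ∧ A ≠ Set.univ ∧ ∀ x ∈ A, ∀ y ∉ A, x < y

/-- `c` is a cut point of `A`. -/
def IsCutPoint (A : Set F) (c : F) : Prop :=
  ∀ x ∈ A, ∀ y ∉ A, x ≤ c ∧ c ≤ y

variable (F) in
/-- The Cut Axiom: every cut of `F` has a cut point. -/
def CutAxiom : Prop := ∀ A : Set F, IsCut A → ∃ c : F, IsCutPoint A c

variable (F) in
/-- Lebesgue Integral Property. -/
def LIP : Prop :=
  ∀ a b : F, a ≤ b → ∀ f : F → F, LebMeasurable a b f → HasLebIntegral a b f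

variable (F) in
/-- Lebesgue Measure Property. -/
def LMP : Prop :=
  ∀ a b : F, a ≤ b → ∀ E ⊆ Set.Icc a b, MeasSet a b E → HasLebMeasure a b E

variable (F) in
/-- Littlewood's First Principle. -/
def LP1 : Prop :=
  ∀ a b : F, a ≤ b → ∀ E ⊆ Set.Icc a b, MeasSet a b E → ∀ ε : F, 0 < ε →
    ∃ (m : ℕ) (I : ℕ → Set F), (∀ i < m, IsInterval (I i) ∧ I i ⊆ Set.Icc a b) ∧
      ∃ J : F, HasLebIntegralNN a b
        (chi ((E \ ⋃ i < m, I i) ∪ ((⋃ i < m, I i) \ E))) J ∧ J < ε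

variable (F) in
/-- Littlewood's Second Principle. -/
def LP2 : Prop :=
  ∀ a b : F, a ≤ b → ∀ f : F → F, LebMeasurable a b f → ∀ ε : F, 0 < ε →
    ∃ E ⊆ Set.Icc a b, MeasSet a b E ∧ ContOn (Set.Icc a b \ E) f ∧
      ∃ J : F, HasLebIntegralNN a b (chi E) J ∧ J < ε

variable (F) in
/-- Littlewood's Third Principle. -/
def LP3 : Prop :=
  ∀ a b : F, a ≤ b → ∀ φ : ℕ → F → F, (∀ n, LebMeasurable a b (φ n)) →
    ∀ f : F → F, AEOn a b (fun x => SeqConv (fun n => φ n x) (f x)) →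
    ∀ ε : F, 0 < ε →
      ∃ E ⊆ Set.Icc a b, MeasSet a b E ∧ UnifConvOn (Set.Icc a b \ E) φ f ∧
        ∃ J : F, HasLebIntegralNN a b (chi E) J ∧ J < ε

section Part1
variable {F : Type*} [Field F] [LinearOrder F] [IsStrictOrderedRing F]

lemma seqConv_const (L : F) : SeqConv (fun _ => L) L := by
  intro ε hε
  exact ⟨0, fun n _ => by simp [Set.mem_Ioo, hε, neg_lt_zero.mpr hε]⟩

lemma seqConv_sub {s t : ℕ → F} {L M : F} (hs : SeqConv s L) (ht : SeqConv t M) :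
    SeqConv (fun n => s n - t n) (L - M) := by
  intro ε hε
  obtain ⟨N1, h1⟩ := hs (ε/2) (by linarith)
  obtain ⟨N2, h2⟩ := ht (ε/2) (by linarith)
  refine ⟨max N1 N2, fun n hn => ?_⟩
  have a1 := h1 n (le_trans (le_max_left _ _) hn)
  have a2 := h2 n (le_trans (le_max_right _ _) hn)
  simp only [Set.mem_Ioo] at a1 a2 ⊢
  constructor <;> linarith [a1.1, a1.2, a2.1, a2.2]

lemma seqConv_eventually_const {s : ℕ → F} {c : F} {N : ℕ}
    (h : ∀ n, N ≤ n → s n = c) : SeqConv s c := by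
  intro ε hε
  exact ⟨N, fun n hn => by simp [h n hn, Set.mem_Ioo, hε, neg_lt_zero.mpr hε]⟩

lemma nullSet_mono {a b : F} {S T : Set F} (hST : S ⊆ T) (hT : NullSet a b T) :
    NullSet a b S := by
  intro ε hε
  obtain ⟨c, d, h1, h2, h3⟩ := hT ε hε
  exact ⟨c, d, h1, hST.trans h2, h3⟩

lemma nullSet_empty (a b : F) : NullSet a b (∅ : Set F) := by
  intro ε hε
  refine ⟨fun _ => a, fun _ => a, fun n => ⟨le_refl _, by simp⟩, by simp, 0, hε, ?_⟩
  have : ∀ N : ℕ, (∑ k ∈ Finset.range N, ((fun _ => a) k - (fun _ => a) k)) = 0 := by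
    intro N; simp
  intro ε' hε'
  exact ⟨0, fun n _ => by simp [this, Set.mem_Ioo, hε', neg_lt_zero.mpr hε']⟩

end Part1
section Part2
variable {F : Type*} [Field F] [LinearOrder F] [IsStrictOrderedRing F]

lemma sum_parity (f : ℕ → F) (t : ℕ) :
    ∑ k ∈ Finset.range (2*t), f k
      = ∑ j ∈ Finset.range t, f (2*j) + ∑ j ∈ Finset.range t, f (2*j+1) := by
  induction t with
  | zero => simp
  | succ t ih =>
      have h2 : 2 * (t+1) = (2*t + 1) + 1 := by ring
      rw [h2, Finset.sum_range_succ, Finset.sum_range_succ,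
        Finset.sum_range_succ (fun j => f (2*j)), Finset.sum_range_succ (fun j => f (2*j+1)), ih]
      ring

lemma nullSet_union {a b : F} {S T : Set F} (hS : NullSet a b S) (hT : NullSet a b T) :
    NullSet a b (S ∪ T) := by
  intro ε hε
  obtain ⟨c1, d1, h1, hc1, s1, hs1, hconv1⟩ := hS (ε/2) (by linarith)
  obtain ⟨c2, d2, h2, hc2, s2, hs2, hconv2⟩ := hT (ε/2) (by linarith)
  classical
  refine ⟨fun k => if Even k then c1 (k/2) else c2 (k/2),
          fun k => if Even k then d1 (k/2) else d2 (k/2), ?_, ?_, s1 + s2, by linarith, ?_⟩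
  · intro k
    by_cases hk : Even k <;> simp only [hk, if_true, if_false] <;>
      [exact h1 (k/2); exact h2 (k/2)]
  · intro x hx
    rcases hx with hx | hx
    · obtain ⟨n, hn⟩ := Set.mem_iUnion.mp (hc1 hx)
      refine Set.mem_iUnion.mpr ⟨2*n, ?_⟩
      have : Even (2*n) := even_two_mul n
      simp only [this, if_true, Nat.mul_div_cancel_left n (by norm_num : 0 < 2)]
      exact hn
    · obtain ⟨n, hn⟩ := Set.mem_iUnion.mp (hc2 hx)
      refine Set.mem_iUnion.mpr ⟨2*n+1, ?_⟩
      have hodd : ¬ Even (2*n+1) := by simp [Nat.even_add_one, Nat.even_mul]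
      have hdiv : (2*n+1)/2 = n := by omega
      simp only [hodd, if_false, hdiv]
      exact hn
  · -- convergence of partial sums
    set f : ℕ → F := fun k => (if Even k then d1 (k/2) else d2 (k/2))
        - (if Even k then c1 (k/2) else c2 (k/2)) with hf
    have hfe : ∀ j, f (2*j) = d1 j - c1 j := by
      intro j
      have : Even (2*j) := even_two_mul j
      simp [hf, this, Nat.mul_div_cancel_left j (by norm_num : 0 < 2)]
    have hfo : ∀ j, f (2*j+1) = d2 j - c2 j := by
      intro j
      have hodd : ¬ Even (2*j+1) := by simp [Nat.even_add_one, Nat.even_mul]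
      have hdiv : (2*j+1)/2 = j := by omega
      simp [hf, hodd, hdiv]
    have hsum : ∀ t, ∑ k ∈ Finset.range (2*t), f k
        = (∑ j ∈ Finset.range t, (d1 j - c1 j)) + ∑ j ∈ Finset.range t, (d2 j - c2 j) := by
      intro t
      rw [sum_parity]
      congr 1
      · exact Finset.sum_congr rfl fun j _ => hfe j
      · exact Finset.sum_congr rfl fun j _ => hfo j
    intro ε' hε'
    obtain ⟨N1, hN1⟩ := hconv1 (ε'/2) (by linarith)
    obtain ⟨N2, hN2⟩ := hconv2 (ε'/2) (by linarith)
    refine ⟨2 * (N1 + N2), fun n hn => ?_⟩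
    set t := n / 2 with htdef
    have hN1t : N1 ≤ t := by omega
    have hN2t : N2 ≤ t := by omega
    have b1 := hN1 t hN1t
    have b1' := hN1 (t+1) (by omega)
    have b2 := hN2 t hN2t
    simp only [Set.mem_Ioo] at b1 b1' b2 ⊢
    rcases Nat.even_or_odd n with he | ho
    · have : n = 2 * t := by rcases he with ⟨m, hm⟩; omega
      rw [this, hsum]
      constructor <;> linarith [b1.1, b1.2, b2.1, b2.2]
    · have hn' : n = 2 * t + 1 := by
        rcases ho with ⟨m, hm⟩; omega
      rw [hn', Finset.sum_range_succ, hsum]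
      have h2t : Even (2*t) := even_two_mul t
      have hdiv : (2*t)/2 = t := by omega
      rw [if_pos h2t, if_pos h2t, hdiv]
      constructor <;> linarith [b1'.1, b1'.2, b2.1, b2.2,
        (Finset.sum_range_succ (fun j => d1 j - c1 j) t)]
  
end Part2
section Part3
variable {F : Type*} [Field F] [LinearOrder F] [IsStrictOrderedRing F]

lemma partition_le {m : ℕ} {p : ℕ → F} (h : ∀ i < m, p i < p (i+1)) :
    ∀ i j, i ≤ j → j ≤ m → p i ≤ p j := by
  intro i j hij hjm
  induction j with
  | zero => have : i = 0 := by omega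
            subst this; exact le_refl _
  | succ j ih =>
      by_cases hij' : i ≤ j
      · exact le_trans (ih hij' (by omega)) (le_of_lt (h j (by omega)))
      · have : i = j + 1 := by omega
        subst this; exact le_refl _

lemma step_const_on {a b : F} {φ : F → F} {m : ℕ} {p : ℕ → F}
    (h0 : p 0 = a) (hm : p m = b)
    (hconst : ∀ i < m, ∃ M, ∀ t ∈ Set.Ioo (p i) (p (i+1)), φ t = M)
    {u v : F} (hau : a ≤ u) (huv : u < v) (hvb : v ≤ b)
    (havoid : ∀ i ≤ m, p i ∉ Set.Ioo u v) :
    ∃ M, ∀ t ∈ Set.Ioo u v, φ t = M := by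
  classical
  set s := (Finset.range (m+1)).filter (fun i => p i ≤ u) with hs
  have h0s : 0 ∈ s := by
    simp only [hs, Finset.mem_filter, Finset.mem_range]
    exact ⟨by omega, by rw [h0]; exact hau⟩
  have hne : s.Nonempty := ⟨0, h0s⟩
  set j := s.max' hne with hj
  have hjs : j ∈ s := s.max'_mem hne
  have hjm : j ≤ m := by
    have := (Finset.mem_filter.mp hjs).1
    simp only [Finset.mem_range] at this; omega
  have hpj : p j ≤ u := (Finset.mem_filter.mp hjs).2
  have hjm' : j < m := by
    rcases eq_or_lt_of_le hjm with h | h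
    · exfalso; rw [h, hm] at hpj; linarith
    · exact h
  have hnext : u < p (j+1) := by
    by_contra hcon
    push_neg at hcon
    have hmem : j+1 ∈ s := Finset.mem_filter.mpr
      ⟨Finset.mem_range.mpr (by omega), hcon⟩
    have := Finset.le_max' s _ hmem
    omega
  have hge : v ≤ p (j+1) := by
    by_contra hcon
    push_neg at hcon
    exact havoid (j+1) (by omega) ⟨hnext, hcon⟩
  obtain ⟨M, hM⟩ := hconst j hjm'
  exact ⟨M, fun t ht => hM t ⟨lt_of_le_of_lt hpj ht.1, lt_of_lt_of_le ht.2 hge⟩⟩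

lemma exists_mem_piece {a b c : F} {m : ℕ} {p : ℕ → F}
    (h0 : p 0 = a) (hm : p m = b)
    (hac : a < c) (hcb : c < b) (hnot : ∀ i ≤ m, p i ≠ c) :
    ∃ i < m, p i < c ∧ c < p (i+1) := by
  classical
  set s := (Finset.range (m+1)).filter (fun i => p i < c) with hs
  have h0s : 0 ∈ s := by
    simp only [hs, Finset.mem_filter, Finset.mem_range]
    exact ⟨by omega, by rw [h0]; exact hac⟩
  have hne : s.Nonempty := ⟨0, h0s⟩
  set j := s.max' hne with hj
  have hjs : j ∈ s := s.max'_mem hne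
  have hjm : j ≤ m := by
    have := (Finset.mem_filter.mp hjs).1
    simp only [Finset.mem_range] at this; omega
  have hpj : p j < c := (Finset.mem_filter.mp hjs).2
  have hjm' : j < m := by
    rcases eq_or_lt_of_le hjm with h | h
    · exfalso; rw [h, hm] at hpj; linarith
    · exact h
  refine ⟨j, hjm', hpj, ?_⟩
  have hnotlt : ¬ (p (j+1) < c) := by
    intro hcon
    have hmem : j+1 ∈ s := Finset.mem_filter.mpr
      ⟨Finset.mem_range.mpr (by omega), hcon⟩
    have := Finset.le_max' s _ hmem
    omega
  rcases lt_trichotomy (p (j+1)) c with h | h | h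
  · exact absurd h hnotlt
  · exact absurd h (hnot (j+1) (by omega))
  · exact h

lemma isStepOn_sub {a b : F} {φ ψ : F → F}
    (h1 : IsStepOn a b φ) (h2 : IsStepOn a b ψ) :
    IsStepOn a b (fun x => φ x - ψ x) := by
  classical
  obtain ⟨m, p, hp0, hpm, hpmono, hpc⟩ := h1
  obtain ⟨l, q, hq0, hql, hqmono, hqc⟩ := h2
  set T : Finset F := (Finset.range (m+1)).image p ∪ (Finset.range (l+1)).image q with hT
  have haT : a ∈ T := by
    apply Finset.mem_union_left
    exact Finset.mem_image.mpr ⟨0, Finset.mem_range.mpr (by omega), hp0⟩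
  have hbT : b ∈ T := by
    apply Finset.mem_union_left
    exact Finset.mem_image.mpr ⟨m, Finset.mem_range.mpr (by omega), hpm⟩
  have hTmem : ∀ t ∈ T, a ≤ t ∧ t ≤ b := by
    intro t ht
    rcases Finset.mem_union.mp ht with h | h
    · obtain ⟨i, hi, rfl⟩ := Finset.mem_image.mp h
      have hi' : i ≤ m := by simpa using Nat.lt_succ_iff.mp (Finset.mem_range.mp hi)
      exact ⟨hp0 ▸ partition_le hpmono 0 i (by omega) hi',
             hpm ▸ partition_le hpmono i m hi' (le_refl _)⟩
    · obtain ⟨i, hi, rfl⟩ := Finset.mem_image.mp h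
      have hi' : i ≤ l := by simpa using Nat.lt_succ_iff.mp (Finset.mem_range.mp hi)
      exact ⟨hq0 ▸ partition_le hqmono 0 i (by omega) hi',
             hql ▸ partition_le hqmono i l hi' (le_refl _)⟩
  have hpos : 0 < T.card := Finset.card_pos.mpr ⟨a, haT⟩
  set n := T.card - 1 with hn
  have hcard : T.card = n + 1 := by omega
  set e := T.orderIsoOfFin hcard with he
  set x : ℕ → F := fun i => if h : i < n+1 then (e ⟨i, h⟩ : F) else b with hx
  have hxval : ∀ i (h : i < n+1), x i = (e ⟨i, h⟩ : F) := by
    intro i h; simp only [hx, dif_pos h]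
  have hxmem : ∀ i (h : i < n+1), x i ∈ T := by
    intro i h; rw [hxval i h]; exact (e ⟨i, h⟩).2
  -- x 0 = a
  have hx0 : x 0 = a := by
    have h0 : (0:ℕ) < n+1 := by omega
    rw [hxval 0 h0]
    have hk : e (e.symm ⟨a, haT⟩) = ⟨a, haT⟩ := e.apply_symm_apply _
    have hle : (⟨0, h0⟩ : Fin (n+1)) ≤ e.symm ⟨a, haT⟩ := by
      simp [Fin.le_def]
    have := e.monotone hle
    rw [hk] at this
    have h1 : (e ⟨0, h0⟩ : F) ≤ a := this
    exact le_antisymm h1 (hTmem _ ((e ⟨0, h0⟩).2)).1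
  have hxn : x n = b := by
    have hnlt : n < n+1 := by omega
    rw [hxval n hnlt]
    have hk : e (e.symm ⟨b, hbT⟩) = ⟨b, hbT⟩ := e.apply_symm_apply _
    have hle : e.symm ⟨b, hbT⟩ ≤ (⟨n, hnlt⟩ : Fin (n+1)) := by
      simp [Fin.le_def]
      omega
    have := e.monotone hle
    rw [hk] at this
    have h1 : b ≤ (e ⟨n, hnlt⟩ : F) := this
    exact le_antisymm (hTmem _ ((e ⟨n, hnlt⟩).2)).2 h1
  have hxmono : ∀ i < n, x i < x (i+1) := by
    intro i hi
    rw [hxval i (by omega), hxval (i+1) (by omega)]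
    have : (⟨i, by omega⟩ : Fin (n+1)) < ⟨i+1, by omega⟩ := by
      simp [Fin.lt_def]
    exact Subtype.coe_lt_coe.mpr (e.strictMono this)
  refine ⟨n, x, hx0, hxn, hxmono, ?_⟩
  intro i hi
  have hi1 : i < n + 1 := by omega
  have hi2 : i + 1 < n + 1 := by omega
  have hau : a ≤ x i := (hTmem _ (hxmem i hi1)).1
  have hvb : x (i+1) ≤ b := (hTmem _ (hxmem (i+1) hi2)).2
  have huv : x i < x (i+1) := hxmono i hi
  have havoidT : ∀ t ∈ T, t ∉ Set.Ioo (x i) (x (i+1)) := by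
    intro t htT hmem
    set r := e.symm ⟨t, htT⟩ with hr
    have hk : (e r : F) = t := by rw [hr, e.apply_symm_apply]
    rw [hxval i hi1, hxval (i+1) hi2] at hmem
    have hlt1 : e ⟨i, hi1⟩ < e r := Subtype.coe_lt_coe.mp (by rw [hk]; exact hmem.1)
    have hlt2 : e r < e ⟨i+1, hi2⟩ := Subtype.coe_lt_coe.mp (by rw [hk]; exact hmem.2)
    have h1 : (⟨i, hi1⟩ : Fin (n+1)) < r := e.lt_iff_lt.mp hlt1
    have h2 : r < (⟨i+1, hi2⟩ : Fin (n+1)) := e.lt_iff_lt.mp hlt2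
    simp [Fin.lt_def] at h1 h2
    omega
  obtain ⟨M1, hM1⟩ := step_const_on hp0 hpm hpc hau huv hvb
    (fun k hk => havoidT (p k) (Finset.mem_union_left _
      (Finset.mem_image.mpr ⟨k, Finset.mem_range.mpr (by omega), rfl⟩)))
  obtain ⟨M2, hM2⟩ := step_const_on hq0 hql hqc hau huv hvb
    (fun k hk => havoidT (q k) (Finset.mem_union_right _
      (Finset.mem_image.mpr ⟨k, Finset.mem_range.mpr (by omega), rfl⟩)))
  exact ⟨M1 - M2, fun t ht => by simp only []; rw [hM1 t ht, hM2 t ht]⟩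

lemma isStepOn_comp {a b : F} {φ : F → F} (h : IsStepOn a b φ) (g : F → F) :
    IsStepOn a b (fun x => g (φ x)) := by
  obtain ⟨m, p, h0, hm, hmono, hc⟩ := h
  refine ⟨m, p, h0, hm, hmono, fun i hi => ?_⟩
  obtain ⟨M, hM⟩ := hc i hi
  exact ⟨g M, fun t ht => by simp only []; rw [hM t ht]⟩

lemma constApproxSeq {a b : F} {g : F → F} (hstep : IsStepOn a b g)
    (hnn : ∀ x, 0 ≤ g x) : ApproxSeq a b (fun _ => g) g := by
  refine ⟨fun _ => hstep, fun _ x _ => hnn x, fun _ x _ => le_refl _, ?_⟩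
  apply nullSet_mono _ (nullSet_empty a b)
  intro x hx
  exact (hx.2 (seqConv_const (g x))).elim

lemma isStepOn_lebMeasurable {a b : F} {φ : F → F} (h : IsStepOn a b φ) :
    LebMeasurable a b φ := by
  constructor
  · exact ⟨fun _ => (fun x => max (φ x) 0),
      constApproxSeq (isStepOn_comp h (fun y => max y 0)) (fun x => le_max_right _ _)⟩
  · exact ⟨fun _ => (fun x => max (-(φ x)) 0),
      constApproxSeq (isStepOn_comp h (fun y => max (-y) 0)) (fun x => le_max_right _ _)⟩

lemma isStepOn_congr_interior {a b : F} {φ φ' : F → F}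
    (h : IsStepOn a b φ) (hcong : ∀ x, a < x → x < b → φ' x = φ x) :
    IsStepOn a b φ' := by
  obtain ⟨m, p, h0, hm, hmono, hc⟩ := h
  refine ⟨m, p, h0, hm, hmono, fun i hi => ?_⟩
  obtain ⟨M, hM⟩ := hc i hi
  refine ⟨M, fun t ht => ?_⟩
  have hat : a < t := lt_of_le_of_lt
    (h0 ▸ partition_le hmono 0 i (by omega) (by omega)) ht.1
  have htb : t < b := lt_of_lt_of_le ht.2
    (hm ▸ partition_le hmono (i+1) m (by omega) (le_refl _))
  rw [hcong t hat htb]; exact hM t ht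

lemma hasStepIntegral_congr_interior {a b : F} {φ φ' : F → F} {I : F}
    (h : HasStepIntegral a b φ I) (hcong : ∀ x, a < x → x < b → φ' x = φ x) :
    HasStepIntegral a b φ' I := by
  obtain ⟨m, p, M, h0, hm, hmono, hc, hI⟩ := h
  refine ⟨m, p, M, h0, hm, hmono, fun i hi t ht => ?_, hI⟩
  have hat : a < t := lt_of_le_of_lt
    (h0 ▸ partition_le hmono 0 i (by omega) (by omega)) ht.1
  have htb : t < b := lt_of_lt_of_le ht.2
    (hm ▸ partition_le hmono (i+1) m (by omega) (le_refl _))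
  rw [hcong t hat htb]; exact hc i hi t ht

end Part3
section Part4
variable {F : Type*} [Field F] [LinearOrder F] [IsStrictOrderedRing F]

lemma approxSeq_congr {a b : F} {f g : F → F} {D : Set F} {φ : ℕ → F → F}
    (hD : NullSet a b D) (hfg : ∀ x ∈ Set.Icc a b, x ∉ D → f x = g x)
    (h : ApproxSeq a b φ f) : ApproxSeq a b φ g := by
  obtain ⟨hstep, hnn, hdec, hae⟩ := h
  refine ⟨hstep, hnn, hdec, ?_⟩
  unfold AEOn at hae ⊢
  apply nullSet_mono _ (nullSet_union hae hD)
  intro x hx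
  by_cases hxD : x ∈ D
  · exact Or.inr hxD
  · refine Or.inl ⟨hx.1, fun hconv => hx.2 ?_⟩
    show SeqConv (fun n => φ n x) (g x)
    rw [← hfg x hx.1 hxD]
    exact hconv

lemma lebMeasurableNN_congr {a b : F} {f g : F → F} {D : Set F}
    (hD : NullSet a b D) (hfg : ∀ x ∈ Set.Icc a b, x ∉ D → f x = g x)
    (h : LebMeasurableNN a b f) : LebMeasurableNN a b g := by
  obtain ⟨φ, hφ⟩ := h
  exact ⟨φ, approxSeq_congr hD hfg hφ⟩

lemma hasLebIntegralNN_congr {a b : F} {f g : F → F} {D : Set F} {J : F}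
    (hD : NullSet a b D) (hfg : ∀ x ∈ Set.Icc a b, x ∉ D → f x = g x)
    (h : HasLebIntegralNN a b f J) : HasLebIntegralNN a b g J := by
  refine ⟨lebMeasurableNN_congr hD hfg h.1, ?_⟩
  intro φ hφ J' hJ'
  exact h.2 φ (approxSeq_congr hD (fun x hx hxD => (hfg x hx hxD).symm) hφ) J' hJ'

lemma approxSeq_endpoints {a b : F} {f g : F → F} {φ : ℕ → F → F}
    (hfg : ∀ x, a < x → x < b → f x = g x) (hga : 0 ≤ g a) (hgb : 0 ≤ g b)
    (h : ApproxSeq a b φ f) :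
    ApproxSeq a b (fun n x => if x = a then g a else if x = b then g b else φ n x) g := by
  classical
  obtain ⟨hstep, hnn, hdec, hae⟩ := h
  refine ⟨fun n => isStepOn_congr_interior (hstep n) ?_, ?_, ?_, ?_⟩
  · intro x hax hxb
    show (if x = a then g a else if x = b then g b else φ _ x) = φ _ x
    rw [if_neg (ne_of_gt hax), if_neg (ne_of_lt hxb)]
  · intro n x hx
    dsimp only
    split_ifs with h1 h2
    exacts [hga, hgb, hnn n x hx]
  · intro n x hx
    dsimp only
    split_ifs with h1 h2
    exacts [le_refl _, le_refl _, hdec n x hx]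
  · unfold AEOn at hae ⊢
    apply nullSet_mono _ hae
    intro x hx
    obtain ⟨hxI, hxn⟩ := hx
    refine ⟨hxI, fun hconv => hxn ?_⟩
    by_cases h1 : x = a
    · subst h1
      exact seqConv_eventually_const (N := 0) (fun n _ => by simp)
    · by_cases h2 : x = b
      · subst h2
        exact seqConv_eventually_const (N := 0) (fun n _ => by simp [h1])
      · have hax : a < x := lt_of_le_of_ne hxI.1 (Ne.symm h1)
        have hxb : x < b := lt_of_le_of_ne hxI.2 h2
        have heq : (fun n => if x = a then g a else if x = b then g b else φ n x)
            = fun n => φ n x := funext fun n => by rw [if_neg h1, if_neg h2]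
        show SeqConv (fun n => if x = a then g a else if x = b then g b else φ n x) (g x)
        rw [heq, ← hfg x hax hxb]
        exact hconv

lemma hasLebIntegralNN_endpoints {a b : F} {f g : F → F} {J : F}
    (hfg : ∀ x, a < x → x < b → f x = g x)
    (hga : 0 ≤ g a) (hgb : 0 ≤ g b) (hfa : 0 ≤ f a) (hfb : 0 ≤ f b)
    (h : HasLebIntegralNN a b f J) : HasLebIntegralNN a b g J := by
  classical
  constructor
  · obtain ⟨φ, hφ⟩ := h.1
    exact ⟨_, approxSeq_endpoints hfg hga hgb hφ⟩
  · intro κ hκ J' hJ'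
    have hκ' := approxSeq_endpoints (f := g) (g := f)
      (fun x h1 h2 => (hfg x h1 h2).symm) hfa hfb hκ
    apply h.2 _ hκ' J'
    intro n
    apply hasStepIntegral_congr_interior (hJ' n)
    intro x hax hxb
    show (if x = a then f a else if x = b then f b else κ _ x) = κ _ x
    rw [if_neg (ne_of_gt hax), if_neg (ne_of_lt hxb)]

lemma chi_nonneg (E : Set F) (x : F) : 0 ≤ chi E x :=
  Set.indicator_nonneg (fun _ _ => zero_le_one) x

lemma chi_eq_of_iff {E E' : Set F} {x : F} (h : x ∈ E ↔ x ∈ E') :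
    chi E x = chi E' x := by
  classical
  unfold chi
  by_cases hx : x ∈ E
  · rw [Set.indicator_of_mem hx, Set.indicator_of_mem (h.mp hx)]
  · rw [Set.indicator_of_notMem hx, Set.indicator_of_notMem (fun h' => hx (h.mpr h'))]

end Part4
section Part5
variable {F : Type*} [Field F] [LinearOrder F] [IsStrictOrderedRing F]

lemma nullSet_finite_points {a b : F} (q : ℕ → F) (k : ℕ) :
    NullSet a b {x ∈ Set.Ioo a b | ∃ j < k, q j = x} := by
  classical
  intro ε hε
  set r : ℕ → F := fun j => min (ε/(4*(k+1))) (min ((q j - a)/2) ((b - q j)/2)) with hr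
  set cond : ℕ → Prop := fun j => j < k ∧ a < q j ∧ q j < b with hcond
  set c : ℕ → F := fun j => if cond j then q j - r j else a with hc
  set d : ℕ → F := fun j => if cond j then q j + r j else a with hd
  have hrpos : ∀ j, cond j → 0 < r j := by
    intro j hj
    refine lt_min (by positivity) (lt_min ?_ ?_)
    · have := hj.2.1; linarith
    · have := hj.2.2; linarith
  have hL : ∀ j, d j - c j = if cond j then 2 * r j else 0 := by
    intro j
    show (if cond j then q j + r j else a) - (if cond j then q j - r j else a)
        = if cond j then 2 * r j else 0
    by_cases hj : cond j
    · rw [if_pos hj, if_pos hj, if_pos hj]; ring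
    · rw [if_neg hj, if_neg hj, if_neg hj]; ring
  refine ⟨c, d, ?_, ?_, ∑ j ∈ Finset.range k, (d j - c j), ?_, ?_⟩
  · intro j
    by_cases hj : cond j
    · constructor
      · show (if cond j then q j - r j else a) ≤ (if cond j then q j + r j else a)
        rw [if_pos hj, if_pos hj]
        have := hrpos j hj; linarith
      · intro t ht
        have hc' : c j = q j - r j := if_pos hj
        have hd' : d j = q j + r j := if_pos hj
        rw [hc', hd'] at ht
        have h1 : r j ≤ (q j - a)/2 := le_trans (min_le_right _ _) (min_le_left _ _)
        have h2 : r j ≤ (b - q j)/2 := le_trans (min_le_right _ _) (min_le_right _ _)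
        have := hj.2.1; have := hj.2.2
        exact ⟨by linarith [ht.1], by linarith [ht.2]⟩
    · have hc' : c j = a := if_neg hj
      have hd' : d j = a := if_neg hj
      rw [hc', hd']
      exact ⟨le_refl _, by simp⟩
  · intro x hx
    obtain ⟨hxI, j, hjk, hqj⟩ := hx
    subst hqj
    have hj : cond j := ⟨hjk, hxI.1, hxI.2⟩
    refine Set.mem_iUnion.mpr ⟨j, ?_⟩
    have hc' : c j = q j - r j := if_pos hj
    have hd' : d j = q j + r j := if_pos hj
    rw [Set.mem_Ioo, hc', hd']
    have := hrpos j hj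
    exact ⟨by linarith, by linarith⟩
  · have hbound : ∀ j ∈ Finset.range k, d j - c j ≤ ε/(2*(k+1)) := by
      intro j _
      rw [hL j]
      by_cases hj : cond j
      · rw [if_pos hj]
        have h1 : r j ≤ ε/(4*(k+1)) := min_le_left _ _
        have h4 : ε/(4*((k:F)+1)) * 2 = ε/(2*((k:F)+1)) := by
          field_simp; ring
        linarith
      · rw [if_neg hj]; positivity
    have h2k : (0:F) < 2*((k:F)+1) := by positivity
    calc ∑ j ∈ Finset.range k, (d j - c j)
        ≤ ∑ j ∈ Finset.range k, ε/(2*((k:F)+1)) := Finset.sum_le_sum hbound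
      _ = (k:F) * (ε/(2*((k:F)+1))) := by
          rw [Finset.sum_const, Finset.card_range, nsmul_eq_mul]
      _ < ε := by
          rw [mul_div_assoc', div_lt_iff₀ h2k]
          nlinarith [Nat.cast_nonneg (α := F) k]
  · apply seqConv_eventually_const (N := k)
    intro n hn
    show ∑ j ∈ Finset.range n, (d j - c j) = ∑ j ∈ Finset.range k, (d j - c j)
    refine (Finset.sum_subset (Finset.range_subset_range.mpr hn) ?_).symm
    intro j _ hj
    have hjk : ¬ j < k := by simpa using hj
    rw [hL j, if_neg (fun hc' => hjk hc'.1)]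

lemma nullSet_countable_points {a b : F} (hab : a < b) (q : ℕ → F)
    (u : ℕ → F) (hu : ∀ n, 0 < u n) (hu0 : SeqConv u 0) :
    NullSet a b {x ∈ Set.Ioo a b | ∃ j, q j = x} := by
  classical
  intro ε hε
  set μ := min ε (b - a) / 2 with hμ
  have hμpos : 0 < μ := by
    have : 0 < min ε (b - a) := lt_min hε (by linarith)
    simp only [hμ]; linarith
  have hμε : μ < ε := by
    have : min ε (b - a) ≤ ε := min_le_left _ _
    simp only [hμ]; linarith
  have hμba : μ ≤ b - a := by
    have : min ε (b - a) ≤ b - a := min_le_right _ _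
    simp only [hμ]; linarith
  set v : ℕ → F := fun k => Nat.rec μ (fun k vk => min (vk / 2) (u (k + 1))) k with hv
  have hv0 : v 0 = μ := rfl
  have hvsucc : ∀ k, v (k+1) = min (v k / 2) (u (k + 1)) := fun k => rfl
  have hvpos : ∀ k, 0 < v k := by
    intro k
    induction k with
    | zero => exact hμpos
    | succ k ih => rw [hvsucc]; exact lt_min (by linarith) (hu (k+1))
  have hvdec : ∀ k, v (k+1) < v k := by
    intro k
    have h1 : v (k+1) ≤ v k / 2 := by rw [hvsucc]; exact min_le_left _ _
    have := hvpos k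
    linarith
  have hvmono : ∀ i j, i ≤ j → v j ≤ v i := by
    intro i j hij
    induction j with
    | zero => have : i = 0 := by omega
              subst this; exact le_refl _
    | succ j ih =>
        by_cases h : i ≤ j
        · exact le_trans (le_of_lt (hvdec j)) (ih h)
        · have : i = j + 1 := by omega
          subst this; exact le_refl _
  have hvnull : ∀ ε' : F, 0 < ε' → ∃ T, ∀ t, T ≤ t → v t < ε' := by
    intro ε' hε'
    obtain ⟨N, hN⟩ := hu0 ε' hε'
    refine ⟨N + 1, fun t ht => ?_⟩
    obtain ⟨s, rfl⟩ : ∃ s, t = s + 1 := ⟨t - 1, by omega⟩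
    have h1 : v (s+1) ≤ u (s+1) := by rw [hvsucc]; exact min_le_right _ _
    have h2 := hN (s+1) (by omega)
    simp only [Set.mem_Ioo, sub_zero] at h2
    linarith [h2.2]
  set w : ℕ → F := fun j => v j - v (j+1) with hw
  have hwpos : ∀ j, 0 < w j := by
    intro j
    show 0 < v j - v (j+1)
    linarith [hvdec j]
  have hwle : ∀ j, w j ≤ v j := by
    intro j
    show v j - v (j+1) ≤ v j
    linarith [hvpos (j+1)]
  set r : ℕ → F := fun j => min (w j / 4) (min ((q j - a)/2) ((b - q j)/2)) with hr
  set cond : ℕ → Prop := fun j => a < q j ∧ q j < b with hcond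
  set len : ℕ → F := fun j => if cond j then 2 * r j else 0 with hlen
  have hrpos : ∀ j, cond j → 0 < r j := by
    intro j hj
    refine lt_min (div_pos (hwpos j) (by norm_num)) (lt_min ?_ ?_)
    · have := hj.1; linarith
    · have := hj.2; linarith
  have hlen_nonneg : ∀ j, 0 ≤ len j := by
    intro j
    show 0 ≤ if cond j then 2 * r j else 0
    by_cases hj : cond j
    · rw [if_pos hj]; linarith [hrpos j hj]
    · rw [if_neg hj]
  have hlen_le : ∀ j, len j ≤ w j / 2 := by
    intro j
    show (if cond j then 2 * r j else 0) ≤ w j / 2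
    by_cases hj : cond j
    · rw [if_pos hj]
      have : r j ≤ w j / 4 := min_le_left _ _
      linarith
    · rw [if_neg hj]
      exact div_nonneg (le_of_lt (hwpos j)) (by norm_num)
  have hlen_le_w : ∀ j, len j ≤ w j :=
    fun j => le_trans (hlen_le j) (div_le_self (le_of_lt (hwpos j)) one_le_two)
  set c : ℕ → F := fun n => if Even n then
      (if cond (n/2) then q (n/2) - r (n/2) else a) else a with hcc
  set d : ℕ → F := fun n => if Even n then
      (if cond (n/2) then q (n/2) + r (n/2) else a) else a + (w (n/2) - len (n/2)) with hdd
  have hce : ∀ j, c (2*j) = if cond j then q j - r j else a := by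
    intro j
    have h2 : Even (2*j) := even_two_mul j
    have hdiv : 2*j/2 = j := by omega
    show (if Even (2*j) then (if cond (2*j/2) then q (2*j/2) - r (2*j/2) else a) else a) = _
    rw [if_pos h2, hdiv]
  have hde : ∀ j, d (2*j) = if cond j then q j + r j else a := by
    intro j
    have h2 : Even (2*j) := even_two_mul j
    have hdiv : 2*j/2 = j := by omega
    show (if Even (2*j) then (if cond (2*j/2) then q (2*j/2) + r (2*j/2) else a)
        else a + (w (2*j/2) - len (2*j/2))) = _
    rw [if_pos h2, hdiv]
  have hco : ∀ j, c (2*j+1) = a := by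
    intro j
    have h2 : ¬ Even (2*j+1) := by simp [Nat.even_add_one, Nat.even_mul]
    show (if Even (2*j+1) then (if cond ((2*j+1)/2) then q ((2*j+1)/2) - r ((2*j+1)/2) else a)
        else a) = a
    rw [if_neg h2]
  have hdo : ∀ j, d (2*j+1) = a + (w j - len j) := by
    intro j
    have h2 : ¬ Even (2*j+1) := by simp [Nat.even_add_one, Nat.even_mul]
    have hdiv : (2*j+1)/2 = j := by omega
    show (if Even (2*j+1) then (if cond ((2*j+1)/2) then q ((2*j+1)/2) + r ((2*j+1)/2) else a)
        else a + (w ((2*j+1)/2) - len ((2*j+1)/2))) = _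
    rw [if_neg h2, hdiv]
  have hLe : ∀ j, d (2*j) - c (2*j) = len j := by
    intro j
    rw [hce, hde]
    show _ = if cond j then 2 * r j else 0
    by_cases hj : cond j
    · rw [if_pos hj, if_pos hj, if_pos hj]; ring
    · rw [if_neg hj, if_neg hj, if_neg hj]; ring
  have hLo : ∀ j, d (2*j+1) - c (2*j+1) = w j - len j := by
    intro j
    rw [hco, hdo]; ring
  refine ⟨c, d, ?_, ?_, μ, hμε, ?_⟩
  · intro n
    rcases Nat.even_or_odd n with he | ho
    · obtain ⟨m, hm⟩ := he
      have hn : n = 2*m := by omega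
      subst hn
      rw [hce, hde]
      by_cases hj : cond m
      · rw [if_pos hj, if_pos hj]
        have hrp := hrpos m hj
        constructor
        · linarith
        · intro t ht
          rw [Set.mem_Ioo] at ht
          have h1 : r m ≤ (q m - a)/2 := le_trans (min_le_right _ _) (min_le_left _ _)
          have h2' : r m ≤ (b - q m)/2 := le_trans (min_le_right _ _) (min_le_right _ _)
          have := hj.1; have := hj.2
          exact ⟨by linarith [ht.1], by linarith [ht.2]⟩
      · rw [if_neg hj, if_neg hj]
        exact ⟨le_refl _, by simp⟩
    · obtain ⟨m, hm⟩ := ho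
      have hn : n = 2*m+1 := by omega
      subst hn
      rw [hco, hdo]
      have hwv : w m ≤ μ := le_trans (le_trans (hwle m) (hvmono 0 m (by omega))) (le_of_eq hv0)
      constructor
      · have h5 : len m ≤ w m := hlen_le_w m
        linarith [hlen_nonneg m]
      · intro t ht
        rw [Set.mem_Ioo] at ht
        have h1 : t ≥ a := le_of_lt ht.1
        have h2 : w m - len m ≤ w m := by linarith [hlen_nonneg m]
        exact ⟨h1, by linarith [ht.2, hμba]⟩
  · intro x hx
    obtain ⟨hxI, j, hqj⟩ := hx
    subst hqj
    have hj : cond j := ⟨hxI.1, hxI.2⟩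
    refine Set.mem_iUnion.mpr ⟨2*j, ?_⟩
    rw [Set.mem_Ioo, hce, hde, if_pos hj, if_pos hj]
    have := hrpos j hj
    exact ⟨by linarith, by linarith⟩
  · have hsum_even : ∀ t, ∑ k ∈ Finset.range (2*t), (d k - c k) = v 0 - v t := by
      intro t
      rw [sum_parity]
      have h1 : ∑ j ∈ Finset.range t, (d (2*j) - c (2*j)) = ∑ j ∈ Finset.range t, len j :=
        Finset.sum_congr rfl fun j _ => hLe j
      have h2 : ∑ j ∈ Finset.range t, (d (2*j+1) - c (2*j+1))
          = ∑ j ∈ Finset.range t, (w j - len j) :=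
        Finset.sum_congr rfl fun j _ => hLo j
      rw [h1, h2, ← Finset.sum_add_distrib]
      have h3 : ∀ j ∈ Finset.range t, len j + (w j - len j) = v j - v (j+1) := by
        intro j _
        show len j + (w j - len j) = v j - v (j+1)
        have : w j = v j - v (j+1) := rfl
        linarith
      rw [Finset.sum_congr rfl h3]
      exact Finset.sum_range_sub' v t
    intro ε' hε'
    obtain ⟨T, hT⟩ := hvnull ε' hε'
    refine ⟨2*T, fun n hn => ?_⟩
    set t := n / 2 with ht
    have hTt : T ≤ t := by omega
    have hvt := hT t hTt
    have hvtpos := hvpos t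
    rcases Nat.even_or_odd n with he | ho
    · have hn2 : n = 2*t := by rcases he with ⟨m, hm⟩; omega
      show (∑ k ∈ Finset.range n, (d k - c k)) - μ ∈ Set.Ioo (-ε') ε'
      rw [hn2, hsum_even, hv0, Set.mem_Ioo]
      constructor <;> linarith
    · have hn2 : n = 2*t+1 := by rcases ho with ⟨m, hm⟩; omega
      show (∑ k ∈ Finset.range n, (d k - c k)) - μ ∈ Set.Ioo (-ε') ε'
      rw [hn2, Finset.sum_range_succ, hsum_even, hLe, hv0, Set.mem_Ioo]
      have hl1 := hlen_nonneg t
      have hl2 := hlen_le_w t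
      have hw1 := hwpos t
      have hw2 := hwle t
      constructor <;> linarith

end Part5
section Part6
variable {F : Type*} [Field F] [LinearOrder F] [IsStrictOrderedRing F]

lemma degenerate_case (a : F) (f : F → F) (ε : F) (hε : 0 < ε) :
    ∃ E ⊆ Set.Icc a a, MeasSet a a E ∧ ContOn (Set.Icc a a \ E) f ∧
      ∃ J : F, HasLebIntegralNN a a (chi E) J ∧ J < ε := by
  have hstep : IsStepOn a a (chi (∅ : Set F)) :=
    ⟨0, fun _ => a, rfl, rfl, fun i hi => absurd hi (Nat.not_lt_zero i),
      fun i hi => absurd hi (Nat.not_lt_zero i)⟩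
  have happrox : ApproxSeq a a (fun _ => chi (∅ : Set F)) (chi (∅ : Set F)) :=
    constApproxSeq hstep (chi_nonneg _)
  refine ⟨∅, by simp, ⟨_, happrox⟩, ?_, 0, ⟨⟨_, happrox⟩, ?_⟩, hε⟩
  · intro c hc ε' hε'
    refine ⟨1, one_pos, ?_⟩
    intro x hx
    have hxa : x = a := le_antisymm hx.1.1.2 hx.1.1.1
    have hca : c = a := le_antisymm hc.1.2 hc.1.1
    rw [hxa, hca, sub_self]
    exact ⟨neg_lt_zero.mpr hε', hε'⟩
  · intro φ hφ J hJ
    have hJ0 : ∀ n, J n = 0 := by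
      intro n
      obtain ⟨mm, x, M, h0, hm, hmono, _, hI⟩ := hJ n
      have hm0 : mm = 0 := by
        by_contra hmm
        have h1m : 1 ≤ mm := by omega
        have hx1m := partition_le hmono 1 mm h1m (le_refl _)
        have h01 := hmono 0 (by omega)
        rw [h0] at h01; rw [hm] at hx1m
        linarith
      subst hm0
      simpa using hI
    exact seqConv_eventually_const (N := 0) (fun n _ => hJ0 n)

end Part6

theorem littlewoodThird_implies_littlewoodSecond (F : Type*) [Field F] [LinearOrder F] [IsStrictOrderedRing F]
    (hLP3 : ∀ a b : F, a ≤ b → ∀ φ : ℕ → F → F, (∀ n, LebMeasurable a b (φ n)) →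
      ∀ f : F → F, AEOn a b (fun x => SeqConv (fun n => φ n x) (f x)) →
      ∀ ε : F, 0 < ε →
        ∃ E ⊆ Set.Icc a b, MeasSet a b E ∧ UnifConvOn (Set.Icc a b \ E) φ f ∧
          ∃ J : F, HasLebIntegralNN a b (chi E) J ∧ J < ε) :
    ∀ a b : F, a ≤ b → ∀ f : F → F, LebMeasurable a b f → ∀ ε : F, 0 < ε →
      ∃ E ⊆ Set.Icc a b, MeasSet a b E ∧ ContOn (Set.Icc a b \ E) f ∧
        ∃ J : F, HasLebIntegralNN a b (chi E) J ∧ J < ε := by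
  classical
  intro a b hab f hf ε hε
  rcases eq_or_lt_of_le hab with heq | hlt
  · subst heq
    exact degenerate_case a f ε hε
  · obtain ⟨⟨α, hα⟩, ⟨β, hβ⟩⟩ := hf
    set ψ : ℕ → F → F := fun n x => α n x - β n x with hψ
    have hψstep : ∀ n, IsStepOn a b (ψ n) := fun n => isStepOn_sub (hα.1 n) (hβ.1 n)
    have hψmeas : ∀ n, LebMeasurable a b (ψ n) := fun n => isStepOn_lebMeasurable (hψstep n)
    have hae : AEOn a b (fun x => SeqConv (fun n => ψ n x) (f x)) := by
      unfold AEOn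
      apply nullSet_mono _ (nullSet_union hα.2.2.2 hβ.2.2.2)
      intro x hx
      by_cases h1 : SeqConv (fun n => α n x) (max (f x) 0)
      · by_cases h2 : SeqConv (fun n => β n x) (max (-(f x)) 0)
        · exfalso
          apply hx.2
          have hsc := seqConv_sub h1 h2
          rwa [max_zero_sub_max_neg_zero_eq_self] at hsc
        · exact Or.inr ⟨hx.1, h2⟩
      · exact Or.inl ⟨hx.1, h1⟩
    obtain ⟨E, hE, hEmeas, hunif, J, hJ, hJε⟩ := hLP3 a b hab ψ hψmeas f hae ε hε
    choose m p h1 h2 h3 h4 using hψstep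
    by_cases hcase : ∃ u : ℕ → F, (∀ k, 0 < u k) ∧ SeqConv u 0
    · -- Case 1: there is a positive null sequence
      obtain ⟨u, hu, hu0⟩ := hcase
      set qq : ℕ → F := fun j => p (Nat.unpair j).1 (Nat.unpair j).2 with hqq
      set B : Set F := {x ∈ Set.Ioo a b | ∃ j, qq j = x} with hB
      have hBnull : NullSet a b B := nullSet_countable_points hlt qq u hu hu0
      set E' : Set F := E ∪ B ∪ {a, b} with hE'
      have hE'sub : E' ⊆ Set.Icc a b := by
        intro x hx
        rcases hx with (hx | hx) | hx
        · exact hE hx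
        · exact ⟨le_of_lt hx.1.1, le_of_lt hx.1.2⟩
        · rcases hx with hx | hx <;> subst hx
          · exact ⟨le_refl _, hab⟩
          · exact ⟨hab, le_refl _⟩
      have hdiff1 : ∀ x ∈ Set.Icc a b, x ∉ B → chi E x = chi (E ∪ B) x := by
        intro x _ hxB
        exact chi_eq_of_iff ⟨Or.inl, fun h => h.elim id (fun hB' => absurd hB' hxB)⟩
      have meas1 : LebMeasurableNN a b (chi (E ∪ B)) :=
        lebMeasurableNN_congr hBnull hdiff1 hEmeas
      have int1 : HasLebIntegralNN a b (chi (E ∪ B)) J :=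
        hasLebIntegralNN_congr hBnull hdiff1 hJ
      have hdiff2 : ∀ x, a < x → x < b → chi (E ∪ B) x = chi E' x := by
        intro x hax hxb
        refine chi_eq_of_iff ⟨Or.inl, fun h => ?_⟩
        rcases h with h | h
        · exact h
        · rcases h with h | h <;> subst h
          · exact absurd hax (lt_irrefl _)
          · exact absurd hxb (lt_irrefl _)
      have meas2 : MeasSet a b E' := by
        obtain ⟨φ0, hφ0⟩ := meas1
        exact ⟨_, approxSeq_endpoints hdiff2 (chi_nonneg E' a) (chi_nonneg E' b) hφ0⟩
      have int2 : HasLebIntegralNN a b (chi E') J :=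
        hasLebIntegralNN_endpoints hdiff2 (chi_nonneg E' a) (chi_nonneg E' b)
          (chi_nonneg (E ∪ B) a) (chi_nonneg (E ∪ B) b) int1
      refine ⟨E', hE'sub, meas2, ?_, J, int2, hJε⟩
      intro c hc ε' hε'
      have hcE : c ∉ E := fun h => hc.2 (Or.inl (Or.inl h))
      have hcB : c ∉ B := fun h => hc.2 (Or.inl (Or.inr h))
      have hca : c ≠ a := fun h => hc.2 (Or.inr (Or.inl h))
      have hcb : c ≠ b := fun h => hc.2 (Or.inr (Or.inr h))
      have hac : a < c := lt_of_le_of_ne hc.1.1 (Ne.symm hca)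
      have hcb' : c < b := lt_of_le_of_ne hc.1.2 hcb
      obtain ⟨N, hN⟩ := hunif (ε'/2) (by linarith)
      have hnot : ∀ i ≤ m N, p N i ≠ c := by
        intro i _ hcon
        apply hcB
        refine ⟨⟨hac, hcb'⟩, Nat.pair N i, ?_⟩
        show p (Nat.unpair (Nat.pair N i)).1 (Nat.unpair (Nat.pair N i)).2 = c
        rw [Nat.unpair_pair]
        exact hcon
      obtain ⟨i, him, hpi, hpc⟩ := exists_mem_piece (h1 N) (h2 N) hac hcb' hnot
      obtain ⟨M, hM⟩ := h4 N i him
      refine ⟨min (c - p N i) (p N (i+1) - c), lt_min (by linarith) (by linarith), ?_⟩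
      intro x hx
      obtain ⟨hxD, hxIoo⟩ := hx
      have hl1 := min_le_left (c - p N i) (p N (i+1) - c)
      have hl2 := min_le_right (c - p N i) (p N (i+1) - c)
      rw [Set.mem_Ioo] at hxIoo
      have hxpiece : x ∈ Set.Ioo (p N i) (p N (i+1)) := by
        rw [Set.mem_Ioo]
        constructor <;> linarith [hxIoo.1, hxIoo.2]
      have hcpiece : c ∈ Set.Ioo (p N i) (p N (i+1)) := ⟨hpi, hpc⟩
      have hxA : x ∈ Set.Icc a b \ E :=
        ⟨hxD.1, fun hxe => hxD.2 (Or.inl (Or.inl hxe))⟩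
      have hfx := hN N (le_refl N) x hxA
      have hfc := hN N (le_refl N) c ⟨hc.1, hcE⟩
      rw [hM x hxpiece] at hfx
      rw [hM c hcpiece] at hfc
      rw [Set.mem_Ioo] at hfx hfc ⊢
      constructor <;> linarith [hfx.1, hfx.2, hfc.1, hfc.2]
    · -- Case 2: no positive null sequence
      have hclaim : ∃ N, ∀ x ∈ Set.Icc a b \ E, ψ N x = f x := by
        by_contra hcon
        push_neg at hcon
        choose xx hxx hne using hcon
        apply hcase
        refine ⟨fun k => |f (xx k) - ψ k (xx k)|, ?_, ?_⟩
        · intro k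
          rw [abs_pos]
          intro hzero
          exact hne k (by linarith [sub_eq_zero.mp hzero])
        · intro ε0 hε0
          obtain ⟨N, hN⟩ := hunif ε0 hε0
          refine ⟨N, fun k hk => ?_⟩
          have := hN k hk (xx k) (hxx k)
          rw [Set.mem_Ioo] at this ⊢
          rw [sub_zero]
          have habs : |f (xx k) - ψ k (xx k)| < ε0 := abs_lt.mpr ⟨this.1, this.2⟩
          exact ⟨lt_of_lt_of_le (neg_neg_of_pos hε0) (abs_nonneg _), habs⟩
      obtain ⟨N₀, heqA⟩ := hclaim
      set B : Set F := {x ∈ Set.Ioo a b | ∃ j < m N₀ + 1, p N₀ j = x} with hB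
      have hBnull : NullSet a b B := nullSet_finite_points (p N₀) (m N₀ + 1)
      set E' : Set F := E ∪ B ∪ {a, b} with hE'
      have hE'sub : E' ⊆ Set.Icc a b := by
        intro x hx
        rcases hx with (hx | hx) | hx
        · exact hE hx
        · exact ⟨le_of_lt hx.1.1, le_of_lt hx.1.2⟩
        · rcases hx with hx | hx <;> subst hx
          · exact ⟨le_refl _, hab⟩
          · exact ⟨hab, le_refl _⟩
      have hdiff1 : ∀ x ∈ Set.Icc a b, x ∉ B → chi E x = chi (E ∪ B) x := by
        intro x _ hxB
        exact chi_eq_of_iff ⟨Or.inl, fun h => h.elim id (fun hB' => absurd hB' hxB)⟩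
      have meas1 : LebMeasurableNN a b (chi (E ∪ B)) :=
        lebMeasurableNN_congr hBnull hdiff1 hEmeas
      have int1 : HasLebIntegralNN a b (chi (E ∪ B)) J :=
        hasLebIntegralNN_congr hBnull hdiff1 hJ
      have hdiff2 : ∀ x, a < x → x < b → chi (E ∪ B) x = chi E' x := by
        intro x hax hxb
        refine chi_eq_of_iff ⟨Or.inl, fun h => ?_⟩
        rcases h with h | h
        · exact h
        · rcases h with h | h <;> subst h
          · exact absurd hax (lt_irrefl _)
          · exact absurd hxb (lt_irrefl _)
      have meas2 : MeasSet a b E' := by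
        obtain ⟨φ0, hφ0⟩ := meas1
        exact ⟨_, approxSeq_endpoints hdiff2 (chi_nonneg E' a) (chi_nonneg E' b) hφ0⟩
      have int2 : HasLebIntegralNN a b (chi E') J :=
        hasLebIntegralNN_endpoints hdiff2 (chi_nonneg E' a) (chi_nonneg E' b)
          (chi_nonneg (E ∪ B) a) (chi_nonneg (E ∪ B) b) int1
      refine ⟨E', hE'sub, meas2, ?_, J, int2, hJε⟩
      intro c hc ε' hε'
      have hcE : c ∉ E := fun h => hc.2 (Or.inl (Or.inl h))
      have hcB : c ∉ B := fun h => hc.2 (Or.inl (Or.inr h))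
      have hca : c ≠ a := fun h => hc.2 (Or.inr (Or.inl h))
      have hcb : c ≠ b := fun h => hc.2 (Or.inr (Or.inr h))
      have hac : a < c := lt_of_le_of_ne hc.1.1 (Ne.symm hca)
      have hcb' : c < b := lt_of_le_of_ne hc.1.2 hcb
      have hnot : ∀ i ≤ m N₀, p N₀ i ≠ c := by
        intro i hi hcon
        exact hcB ⟨⟨hac, hcb'⟩, i, by omega, hcon⟩
      obtain ⟨i, him, hpi, hpc⟩ := exists_mem_piece (h1 N₀) (h2 N₀) hac hcb' hnot
      obtain ⟨M, hM⟩ := h4 N₀ i him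
      refine ⟨min (c - p N₀ i) (p N₀ (i+1) - c), lt_min (by linarith) (by linarith), ?_⟩
      intro x hx
      obtain ⟨hxD, hxIoo⟩ := hx
      have hl1 := min_le_left (c - p N₀ i) (p N₀ (i+1) - c)
      have hl2 := min_le_right (c - p N₀ i) (p N₀ (i+1) - c)
      rw [Set.mem_Ioo] at hxIoo
      have hxpiece : x ∈ Set.Ioo (p N₀ i) (p N₀ (i+1)) := by
        rw [Set.mem_Ioo]
        constructor <;> linarith [hxIoo.1, hxIoo.2]
      have hcpiece : c ∈ Set.Ioo (p N₀ i) (p N₀ (i+1)) := ⟨hpi, hpc⟩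
      have hxA : x ∈ Set.Icc a b \ E :=
        ⟨hxD.1, fun hxe => hxD.2 (Or.inl (Or.inl hxe))⟩
      have hfx : f x = M := by rw [← heqA x hxA]; exact hM x hxpiece
      have hfc : f c = M := by rw [← heqA c ⟨hc.1, hcE⟩]; exact hM c hcpiece
      rw [hfx, hfc, sub_self]
      exact ⟨neg_lt_zero.mpr hε', hε'⟩

end Littlewood
end

section
/- Let F be a linearly ordered field, let A be a gap of F, let (a_n) be a strictly increasing sequence in A with a := a_1 such that every x ∈ A with a_1 < x lies in the interval (a_n, a_{n+1}] for exactly one n ∈ ℕ, and let b ∈ F∖A. Define φ_n : [a,b] → F by φ_n(x) = 1 − χ_{[a,a_n]}(x). Then (φ_n) is a monotonically decreasing sequence of step functions [a,b] → P ∪ {0} with ∫_a^b φ_n = b − a_n for every n, and (φ_n(x)) converges to χ_E(x) for every x ∈ [a,b], where E := [a,b]∖A. In particular, E is a measurable subset of [a,b]. -/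
namespace Littlewood

variable {F : Type*} [Field F] [LinearOrder F] [IsStrictOrderedRing F]

theorem gap_gives_measurable_set (F : Type*) [Field F] [LinearOrder F] [IsStrictOrderedRing F]
    (A : Set F) (hcut : IsCut A) (hgap : ¬ ∃ c : F, IsCutPoint A c)
    (s : ℕ → F) (hmem : ∀ n, s n ∈ A) (hmono : StrictMono s)
    (hcover : ∀ x ∈ A, s 0 < x → ∃! n : ℕ, x ∈ Set.Ioc (s n) (s (n + 1)))
    (b : F) (hb : b ∉ A) :
    (∀ n, IsStepOn (s 0) b fun x => 1 - chi (Set.Icc (s 0) (s n)) x) ∧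
    (∀ n, ∀ x ∈ Set.Icc (s 0) b, 0 ≤ 1 - chi (Set.Icc (s 0) (s n)) x) ∧
    (∀ n, ∀ x ∈ Set.Icc (s 0) b,
      1 - chi (Set.Icc (s 0) (s (n + 1))) x ≤ 1 - chi (Set.Icc (s 0) (s n)) x) ∧
    (∀ n, HasStepIntegral (s 0) b (fun x => 1 - chi (Set.Icc (s 0) (s n)) x) (b - s n)) ∧
    (∀ x ∈ Set.Icc (s 0) b,
      SeqConv (fun n => 1 - chi (Set.Icc (s 0) (s n)) x) (chi (Set.Icc (s 0) b \ A) x)) ∧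
    MeasSet (s 0) b (Set.Icc (s 0) b \ A) := by
  obtain ⟨hne, hproper, hltAB⟩ := hcut
  have hsb : ∀ n, s n < b := fun n => hltAB _ (hmem n) _ hb
  have h0b : s 0 < b := hsb 0
  have hchi_mem : ∀ (E : Set F) (x : F), x ∈ E → chi E x = 1 := by
    intro E x hx; simp [chi, Set.indicator_of_mem hx]
  have hchi_nmem : ∀ (E : Set F) (x : F), x ∉ E → chi E x = 0 := by
    intro E x hx; simp [chi, Set.indicator_of_notMem hx]
  -- step function property
  have hstep : ∀ n, IsStepOn (s 0) b fun x => 1 - chi (Set.Icc (s 0) (s n)) x := by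
    intro n
    rcases Nat.eq_zero_or_pos n with hn | hn
    · subst hn
      refine ⟨1, fun i => if i = 0 then s 0 else b, rfl, rfl, ?_, ?_⟩
      · intro i hi; interval_cases i; simpa using h0b
      · intro i hi; interval_cases i
        refine ⟨1, fun t ht => ?_⟩
        simp only [if_pos rfl, if_neg one_ne_zero] at ht
        have : t ∉ Set.Icc (s 0) (s 0) := by
          intro h; exact absurd h.2 (not_le.2 ht.1)
        simp only [hchi_nmem _ _ this]; norm_num
    · refine ⟨2, fun i => if i = 0 then s 0 else if i = 1 then s n else b, rfl, rfl, ?_, ?_⟩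
      · intro i hi; interval_cases i
        · simpa using hmono hn
        · simpa using hsb n
      · intro i hi; interval_cases i
        · refine ⟨0, fun t ht => ?_⟩
          simp only [if_pos rfl, if_neg one_ne_zero, if_pos rfl] at ht
          have : t ∈ Set.Icc (s 0) (s n) := ⟨le_of_lt ht.1, le_of_lt ht.2⟩
          simp [hchi_mem _ _ this]
        · refine ⟨1, fun t ht => ?_⟩
          simp only [show (1:ℕ) ≠ 0 by norm_num, show (2:ℕ) ≠ 0 by norm_num,
            show (2:ℕ) ≠ 1 by norm_num, if_neg, if_pos rfl] at ht
          have : t ∉ Set.Icc (s 0) (s n) := by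
            intro h; exact absurd h.2 (not_le.2 ht.1)
          simp [hchi_nmem _ _ this]
  -- nonnegativity
  have hnn : ∀ n, ∀ x ∈ Set.Icc (s 0) b, 0 ≤ 1 - chi (Set.Icc (s 0) (s n)) x := by
    intro n x _
    by_cases hx : x ∈ Set.Icc (s 0) (s n)
    · rw [hchi_mem _ _ hx]; norm_num
    · rw [hchi_nmem _ _ hx]; norm_num
  -- monotonicity
  have hmonoφ : ∀ n, ∀ x ∈ Set.Icc (s 0) b,
      1 - chi (Set.Icc (s 0) (s (n + 1))) x ≤ 1 - chi (Set.Icc (s 0) (s n)) x := by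
    intro n x _
    by_cases hx : x ∈ Set.Icc (s 0) (s n)
    · have hx' : x ∈ Set.Icc (s 0) (s (n + 1)) :=
        ⟨hx.1, hx.2.trans (le_of_lt (hmono (Nat.lt_succ_self n)))⟩
      rw [hchi_mem _ _ hx, hchi_mem _ _ hx']
    · rw [hchi_nmem _ _ hx]
      by_cases hx' : x ∈ Set.Icc (s 0) (s (n + 1))
      · rw [hchi_mem _ _ hx']; norm_num
      · rw [hchi_nmem _ _ hx']
  -- integral
  have hint : ∀ n, HasStepIntegral (s 0) b
      (fun x => 1 - chi (Set.Icc (s 0) (s n)) x) (b - s n) := by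
    intro n
    rcases Nat.eq_zero_or_pos n with hn | hn
    · subst hn
      refine ⟨1, fun i => if i = 0 then s 0 else b, fun _ => 1, rfl, rfl, ?_, ?_, ?_⟩
      · intro i hi; interval_cases i; simpa using h0b
      · intro i hi; interval_cases i
        intro t ht
        simp only [if_pos rfl, if_neg one_ne_zero] at ht
        have : t ∉ Set.Icc (s 0) (s 0) := by
          intro h; exact absurd h.2 (not_le.2 ht.1)
        simp only [hchi_nmem _ _ this]; norm_num
      · simp [Finset.sum_range_succ]
    · refine ⟨2, fun i => if i = 0 then s 0 else if i = 1 then s n else b,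
        fun i => if i = 0 then 0 else 1, rfl, rfl, ?_, ?_, ?_⟩
      · intro i hi; interval_cases i
        · simpa using hmono hn
        · simpa using hsb n
      · intro i hi; interval_cases i
        · intro t ht
          simp only [if_pos rfl, if_neg one_ne_zero] at ht ⊢
          have : t ∈ Set.Icc (s 0) (s n) := ⟨le_of_lt ht.1, le_of_lt ht.2⟩
          simp [hchi_mem _ _ this]
        · intro t ht
          simp only [show (1:ℕ) ≠ 0 by norm_num, show (2:ℕ) ≠ 0 by norm_num,
            show (2:ℕ) ≠ 1 by norm_num, if_neg, if_pos rfl] at ht ⊢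
          have : t ∉ Set.Icc (s 0) (s n) := by
            intro h; exact absurd h.2 (not_le.2 ht.1)
          simp [hchi_nmem _ _ this]
      · simp [Finset.sum_range_succ]
  -- convergence
  have hconv : ∀ x ∈ Set.Icc (s 0) b,
      SeqConv (fun n => 1 - chi (Set.Icc (s 0) (s n)) x)
        (chi (Set.Icc (s 0) b \ A) x) := by
    intro x hx ε hε
    by_cases hxA : x ∈ A
    · rw [hchi_nmem _ _ (fun h => h.2 hxA)]
      rcases eq_or_lt_of_le hx.1 with heq | hlt
      · refine ⟨0, fun n _ => ?_⟩
        have : x ∈ Set.Icc (s 0) (s n) :=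
          ⟨hx.1, heq ▸ hmono.monotone (Nat.zero_le n)⟩
        simp only [hchi_mem _ _ this, Set.mem_Ioo]
        constructor <;> simp <;> linarith
      · obtain ⟨n₀, hn₀, -⟩ := hcover x hxA hlt
        refine ⟨n₀ + 1, fun m hm => ?_⟩
        have : x ∈ Set.Icc (s 0) (s m) :=
          ⟨hx.1, hn₀.2.trans (hmono.monotone hm)⟩
        simp only [hchi_mem _ _ this, Set.mem_Ioo]
        constructor <;> simp <;> linarith
    · rw [hchi_mem (Set.Icc (s 0) b \ A) x ⟨hx, hxA⟩]
      refine ⟨0, fun n _ => ?_⟩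
      have : x ∉ Set.Icc (s 0) (s n) := by
        intro h
        exact absurd (hltAB _ (hmem n) _ hxA) (not_lt.2 h.2)
      simp only [hchi_nmem _ _ this, Set.mem_Ioo]
      constructor <;> simp <;> linarith
  refine ⟨hstep, hnn, hmonoφ, hint, hconv, ?_⟩
  refine ⟨fun n x => 1 - chi (Set.Icc (s 0) (s n)) x, hstep, hnn, hmonoφ, ?_⟩
  intro ε hε
  refine ⟨fun _ => s 0, fun _ => s 0, fun n => ⟨le_refl _, by simp⟩, ?_, 0, hε, ?_⟩
  · intro x hx
    exact absurd (hconv x hx.1) hx.2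
  · intro ε' hε'
    refine ⟨0, fun n _ => ?_⟩
    simp only [sub_self, Finset.sum_const, smul_zero, Set.mem_Ioo, sub_zero]
    constructor <;> linarith

end Littlewood
end

section
/- Let F be a linearly ordered field, let A be a gap of F, let (a_n) be a strictly increasing sequence in A with a := a_1 such that every x ∈ A with a_1 < x lies in the interval (a_n, a_{n+1}] for exactly one n ∈ ℕ, and suppose (a_n) does not converge to any element of F. Let b ∈ F∖A and E := [a,b]∖A. Then the characteristic function χ_E does not have a Lebesgue integral, and E does not have Lebesgue measure. -/
namespace Littlewood

variable {F : Type*} [Field F] [LinearOrder F] [IsStrictOrderedRing F]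

theorem gap_set_has_no_lebesgue_measure (F : Type*) [Field F] [LinearOrder F] [IsStrictOrderedRing F]
    (A : Set F) (hcut : IsCut A) (hgap : ¬ ∃ c : F, IsCutPoint A c)
    (s : ℕ → F) (hmem : ∀ n, s n ∈ A) (hmono : StrictMono s)
    (hcover : ∀ x ∈ A, s 0 < x → ∃! n : ℕ, x ∈ Set.Ioc (s n) (s (n + 1)))
    (hnoconv : ¬ ∃ L : F, SeqConv s L)
    (b : F) (hb : b ∉ A) :
    (¬ ∃ I : F, HasLebIntegralNN (s 0) b (chi (Set.Icc (s 0) b \ A)) I) ∧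
    ¬ HasLebMeasure (s 0) b (Set.Icc (s 0) b \ A) := by
  have hsb : ∀ n, s n < b := fun n => hcut.2.2 _ (hmem n) _ hb
  have hab : s 0 < b := hsb 0
  set E : Set F := Set.Icc (s 0) b \ A with hE
  set φ : ℕ → F → F := fun n => (Set.Ioc (s n) b).indicator (fun _ => 1) with hφ
  have hφval : ∀ n x, s n < x → x ≤ b → φ n x = 1 := by
    intro n x h1 h2
    exact Set.indicator_of_mem (Set.mem_Ioc.mpr ⟨h1, h2⟩) _
  have hφval0 : ∀ n x, ¬(s n < x ∧ x ≤ b) → φ n x = 0 := by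
    intro n x h
    exact Set.indicator_of_notMem (fun hm => h (Set.mem_Ioc.mp hm)) _
  have hchi1 : ∀ x ∈ E, chi E x = 1 := fun x hx => Set.indicator_of_mem hx _
  have hchi0 : ∀ x, x ∉ E → chi E x = 0 := fun x hx => Set.indicator_of_notMem hx _
  -- pointwise convergence everywhere on [a,b]
  have hconv : ∀ x ∈ Set.Icc (s 0) b, SeqConv (fun n => φ n x) (chi E x) := by
    intro x hx
    by_cases hxA : x ∈ A
    · have hc0 : chi E x = 0 := hchi0 x (fun h => h.2 hxA)
      obtain ⟨N, hN⟩ : ∃ N, ∀ n, N ≤ n → x ≤ s n := by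
        rcases lt_or_ge (s 0) x with h | h
        · obtain ⟨m, hm, -⟩ := hcover x hxA h
          exact ⟨m + 1, fun n hn => hm.2.trans (hmono.monotone hn)⟩
        · exact ⟨0, fun n hn => h.trans (hmono.monotone (Nat.zero_le n))⟩
      intro ε hε
      refine ⟨N, fun n hn => ?_⟩
      have h0 : φ n x = 0 := hφval0 n x (fun h => absurd (hN n hn) (not_le.2 h.1))
      simp only [h0, hc0, sub_zero]
      exact Set.mem_Ioo.mpr ⟨neg_lt_zero.mpr hε, hε⟩
    · have hxE : x ∈ E := ⟨hx, hxA⟩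
      have hc1 : chi E x = 1 := hchi1 x hxE
      intro ε hε
      refine ⟨0, fun n _ => ?_⟩
      have h1 : φ n x = 1 := hφval n x (hcut.2.2 _ (hmem n) _ hxA) hx.2
      simp only [h1, hc1, sub_self]
      exact Set.mem_Ioo.mpr ⟨neg_lt_zero.mpr hε, hε⟩
  have happrox : ApproxSeq (s 0) b φ (chi E) := by
    refine ⟨?_, ?_, ?_, ?_⟩
    · intro n
      match n with
      | 0 =>
        refine ⟨1, fun i => if i = 0 then s 0 else b, rfl, rfl, ?_, ?_⟩
        · intro i hi
          interval_cases i
          simpa using hab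
        · intro i hi
          interval_cases i
          refine ⟨1, fun t ht => ?_⟩
          simp only [show (0 : ℕ) + 1 = 1 from rfl, if_pos rfl, if_neg one_ne_zero] at ht
          exact hφval 0 t ht.1 ht.2.le
      | (n+1) =>
        refine ⟨2, fun i => if i = 0 then s 0 else if i = 1 then s (n+1) else b,
          rfl, by norm_num, ?_, ?_⟩
        · intro i hi
          interval_cases i
          · simpa using hmono (Nat.succ_pos n)
          · simpa using hsb (n+1)
        · intro i hi
          interval_cases i
          · refine ⟨0, fun t ht => ?_⟩
            simp only [show (0:ℕ)+1 = 1 from rfl, if_pos rfl, if_neg one_ne_zero] at ht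
            exact hφval0 (n+1) t (fun h => absurd h.1 (not_lt.2 ht.2.le))
          · refine ⟨1, fun t ht => ?_⟩
            norm_num at ht
            exact hφval (n+1) t ht.1 ht.2.le
    · intro n x _
      exact Set.indicator_nonneg (fun _ _ => zero_le_one) x
    · intro n x _
      exact Set.indicator_le_indicator_of_subset
        (Set.Ioc_subset_Ioc_left (hmono (Nat.lt_succ_self n)).le) (fun _ => zero_le_one) x
    · intro ε hε
      refine ⟨fun _ => s 0, fun _ => s 0, fun n => ⟨le_refl _, by simp⟩, ?_, 0, hε, ?_⟩
      · rintro x ⟨hx1, hx2⟩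
        exact absurd (hconv x hx1) hx2
      · intro δ hδ
        refine ⟨0, fun n _ => ?_⟩
        simp only [sub_self, Finset.sum_const_zero, sub_zero]
        exact Set.mem_Ioo.mpr ⟨neg_lt_zero.mpr hδ, hδ⟩
  have hsteps : ∀ n, HasStepIntegral (s 0) b (φ n) (b - s n) := by
    intro n
    match n with
    | 0 =>
      refine ⟨1, fun i => if i = 0 then s 0 else b, fun _ => 1, rfl, rfl, ?_, ?_, ?_⟩
      · intro i hi
        interval_cases i
        simpa using hab
      · intro i hi
        interval_cases i
        intro t ht
        simp only [show (0 : ℕ) + 1 = 1 from rfl, if_pos rfl, if_neg one_ne_zero] at ht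
        exact hφval 0 t ht.1 ht.2.le
      · simp
    | (n+1) =>
      refine ⟨2, fun i => if i = 0 then s 0 else if i = 1 then s (n+1) else b,
        fun i => if i = 0 then 0 else 1, rfl, by norm_num, ?_, ?_, ?_⟩
      · intro i hi
        interval_cases i
        · simpa using hmono (Nat.succ_pos n)
        · simpa using hsb (n+1)
      · intro i hi
        interval_cases i
        · intro t ht
          simp only [show (0:ℕ)+1 = 1 from rfl, if_pos rfl, if_neg one_ne_zero] at ht
          simp only [if_pos rfl]
          exact hφval0 (n+1) t (fun h => absurd h.1 (not_lt.2 ht.2.le))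
        · intro t ht
          norm_num at ht
          simp only [if_neg one_ne_zero]
          exact hφval (n+1) t ht.1 ht.2.le
      · simp [Finset.sum_range_succ]
  have hnoI : ¬ ∃ I : F, HasLebIntegralNN (s 0) b (chi E) I := by
    rintro ⟨I, -, hI⟩
    have hJ := hI φ happrox (fun n => b - s n) hsteps
    apply hnoconv
    refine ⟨b - I, fun ε hε => ?_⟩
    obtain ⟨N, hN⟩ := hJ ε hε
    refine ⟨N, fun n hn => ?_⟩
    have h := hN n hn
    rw [Set.mem_Ioo] at h ⊢
    have h1 : -ε < b - s n - I := h.1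
    have h2 : b - s n - I < ε := h.2
    constructor <;> linarith
  have hnonull : ¬ NullSet (s 0) b E := by
    intro h
    obtain ⟨c, d, hcd, hcov, -⟩ := h 1 one_pos
    have hbE : b ∈ E := ⟨⟨hab.le, le_refl b⟩, hb⟩
    obtain ⟨n, hn⟩ := Set.mem_iUnion.1 (hcov hbE)
    rw [Set.mem_Ioo] at hn
    have ht : (b + d n) / 2 ∈ Set.Ioo (c n) (d n) := by
      constructor <;> [linarith [hn.1, hn.2]; linarith [hn.2]]
    have h2 := ((hcd n).2 ht).2
    linarith [hn.2]
  refine ⟨hnoI, ?_⟩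
  rintro (h | h)
  · exact hnonull h
  · exact hnoI h

end Littlewood
end
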